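/- Let M be the structure monoid of a finite RC-quasigroup (X, ⊳) of size n and class p, with I-structure ν. For x ∈ X set x^{[p]} = ν(x^p). Then for all x ∈ X and u ∈ ℕⁿ, ν(x^p u) = x^{[p]} ν(u) holds in M. -/

import Mathlib

/-- `PiAux op l y` is `Π_{r+1}(x₁, ..., x_r, y)` where `l = [x_r, ..., x₁]`. -/
def PiAux {X : Type*} (op : X → X → X) : List X → X → X
  | [], y => y
  | a :: l, y => op (PiAux op l a) (PiAux op l y)

/-- `SigmaRev op l` is the list of letters of the word `Σ_r(x₁, ..., x_r)` for
`l = [x_r, ..., x₁]` the reversed argument list. -/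
def SigmaRev {X : Type*} (op : X → X → X) : List X → List X
  | [] => []
  | a :: l => SigmaRev op l ++ [PiAux op l a]

/-- The defining relations `x(x ⊳ y) = y(y ⊳ x)` of the structure monoid of `(X, ⊳)`. -/
def structRels {X : Type*} (op : X → X → X) : FreeMonoid X → FreeMonoid X → Prop :=
  fun a b => ∃ x y : X,
    a = FreeMonoid.of x * FreeMonoid.of (op x y) ∧ b = FreeMonoid.of y * FreeMonoid.of (op y x)

lemma piAux_append_rep {X : Type*} (op : X → X → X) (p : ℕ) (x : X)
    (hclass : ∀ y : X, PiAux op (List.replicate p x) y = y) :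
    ∀ (l : List X) (y : X), PiAux op (l ++ List.replicate p x) y = PiAux op l y := by
  intro l
  induction l with
  | nil => intro y; simpa [PiAux] using hclass y
  | cons a l ih => intro y; simp [PiAux, ih]

lemma sigmaRev_append_rep {X : Type*} (op : X → X → X) (p : ℕ) (x : X)
    (hclass : ∀ y : X, PiAux op (List.replicate p x) y = y) :
    ∀ l : List X, SigmaRev op (l ++ List.replicate p x)
      = SigmaRev op (List.replicate p x) ++ SigmaRev op l := by
  intro l
  induction l with
  | nil => simp [SigmaRev]
  | cons a l ih =>
      simp [SigmaRev, ih, piAux_append_rep op p x hclass]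

lemma exists_list_count {X : Type*} [Fintype X] [DecidableEq X] (u : X → ℕ) :
    ∃ m : List X, ∀ y, m.count y = u y := by
  refine ⟨(Finset.univ.toList).flatMap (fun a => List.replicate (u a) a), fun y => ?_⟩
  rw [List.count_flatMap]
  have h1 : ∀ a : X, (List.count y ∘ fun a => List.replicate (u a) a) a
      = if a = y then u y else 0 := by
    intro a
    simp only [Function.comp_apply, List.count_replicate, beq_iff_eq]
    by_cases h : y = a
    · subst h; simp
    · rw [if_neg (fun h' => h h'.symm), if_neg (fun h' => h h'.symm)]
  rw [List.map_congr_left (fun a _ => h1 a), Finset.sum_map_toList]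
  rw [Finset.sum_ite_eq' Finset.univ y (fun _ => u y)]
  simp

/-- in the structure monoid of a finite RC-quasigroup of class `p`, with
I-structure `ν`, one has `ν(x^p u) = x^{[p]} ν(u)` for all `x ∈ X` and `u ∈ ℕⁿ`,
where `x^{[p]} = ν(x^p)`. -/
theorem stmt8 {X : Type*} [Fintype X] [DecidableEq X] (op : X → X → X)
    (hRC : ∀ x y z : X, op (op x y) (op x z) = op (op y x) (op y z))
    (hL : ∀ x : X, Function.Bijective (op x))
    (p : ℕ) (hp : 0 < p)
    (hclass : ∀ x y : X, PiAux op (List.replicate p x) y = y)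
    (ν : (X → ℕ) → PresentedMonoid (structRels op))
    (hν : Function.Bijective ν) (hone : ν 0 = 1)
    (hSigma : ∀ l : List X,
      ν (fun x => l.count x)
        = ((SigmaRev op l.reverse).map (PresentedMonoid.of (structRels op))).prod) :
    ∀ (x : X) (u : X → ℕ),
      ν (p • Pi.single x 1 + u) = ν (p • Pi.single x 1) * ν u := by
  intro x u
  obtain ⟨m, hm⟩ := exists_list_count u
  have hcount1 : (fun y => (List.replicate p x ++ m).count y) = p • Pi.single x 1 + u := by
    funext y
    simp only [List.count_append, List.count_replicate, Pi.add_apply, Pi.smul_apply,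
      Pi.single_apply, hm y, beq_iff_eq, smul_eq_mul]
    by_cases h : y = x
    · simp [h]
    · have h2 : ¬ x = y := fun h' => h h'.symm
      simp [h, h2]
  have hcount2 : (fun y => (List.replicate p x).count y) = p • Pi.single x 1 := by
    funext y
    simp only [List.count_replicate, Pi.smul_apply, Pi.single_apply, beq_iff_eq, smul_eq_mul]
    by_cases h : y = x
    · simp [h]
    · have h2 : ¬ x = y := fun h' => h h'.symm
      simp [h, h2]
  have hcount3 : (fun y => m.count y) = u := funext hm
  rw [← hcount1, ← hcount2, ← hcount3, hSigma, hSigma, hSigma]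
  rw [List.reverse_append, List.reverse_replicate,
    sigmaRev_append_rep op p x (hclass x) m.reverse, List.map_append, List.prod_append]
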